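/- Write Q'_{i−1} = Σ_M C_M(e_i) · M, the sum ranging over monomials M in the variables e_r with r ≠ i, where each coefficient C_M(e_i) ∈ Z_p[e_i] has degree ≤ p−1. If there exists a monomial M such that the Fermat reduction (in the variable e_i) of C_M(e_i) · ∏_{l ∈ Z_p ∖ {1, …, Δ+1, α_{i−1}}} (e_i − l) is not the zero polynomial, then the Fermat reduction Q'_i of Q_i = Q_{i−1} · E^i is not the zero polynomial. Equivalently, if Q'_i is the zero polynomial, then for every monomial M the Fermat reduction of C_M(e_i) · ∏_{l ∈ Z_p ∖ {1, …, Δ+1, α_{i−1}}} (e_i − l) is zero. -/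

import Mathlib

open MvPolynomial
open scoped Classical

noncomputable section

/-- Exponent reduction implementing Fermat's relation `x^p ≡ x`:
`0 ↦ 0` and `k ↦ ((k-1) mod (p-1)) + 1` for `k ≥ 1`. -/
def fermatExp (p k : ℕ) : ℕ := if k = 0 then 0 else (k - 1) % (p - 1) + 1

lemma fermatExp_zero (p : ℕ) : fermatExp p 0 = 0 := by simp [fermatExp]

/-- The Fermat reduction `F'` of a multivariate polynomial over `Z_p`: every exponent is
reduced using `x^p ≡ x`, so that the result has degree `≤ p-1` in each variable. -/
def fermatReduce {σ : Type*} (p : ℕ) (F : MvPolynomial σ (ZMod p)) : MvPolynomial σ (ZMod p) :=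
  F.support.sum fun d => monomial (d.mapRange (fermatExp p) (fermatExp_zero p)) (F.coeff d)

/-- Univariate Fermat reduction. -/
def fermatReduceUni (p : ℕ) (f : Polynomial (ZMod p)) : Polynomial (ZMod p) :=
  f.support.sum fun k => Polynomial.monomial (fermatExp p k) (f.coeff k)



-- ### Auxiliary lemmas

lemma fermatExp_le_self (p k : ℕ) : fermatExp p k ≤ k := by
  unfold fermatExp
  split
  · omega
  · have := Nat.mod_le (k-1) (p-1); omega

lemma fermatExp_le (p k : ℕ) (hp : 2 ≤ p) : fermatExp p k ≤ p - 1 := by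
  unfold fermatExp
  split
  · omega
  · have : (k-1) % (p-1) < p - 1 := Nat.mod_lt _ (by omega)
    omega

lemma fermatExp_eq_zero_iff (p k : ℕ) : fermatExp p k = 0 ↔ k = 0 := by
  unfold fermatExp; split <;> omega

lemma pow_fermatExp (p : ℕ) [Fact p.Prime] (x : ZMod p) (k : ℕ) :
    x ^ fermatExp p k = x ^ k := by
  rcases Nat.eq_zero_or_pos k with hk | hk
  · subst hk; rw [fermatExp_zero]
  by_cases hx : x = 0
  · subst hx
    rw [zero_pow hk.ne', zero_pow (by rw [Ne, fermatExp_eq_zero_iff]; omega)]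
  · have hp2 : 2 ≤ p := (Fact.out : p.Prime).two_le
    have h1 : x ^ (p - 1) = 1 := ZMod.pow_card_sub_one_eq_one hx
    have hk1 : k = (k - 1) % (p - 1) + 1 + (p - 1) * ((k - 1) / (p - 1)) := by
      have := Nat.mod_add_div (k - 1) (p - 1); omega
    calc x ^ fermatExp p k = x ^ ((k-1) % (p-1) + 1) := by
          rw [show fermatExp p k = (k-1) % (p-1) + 1 from if_neg hk.ne']
      _ = x ^ ((k-1) % (p-1) + 1) * (x ^ (p-1)) ^ ((k-1)/(p-1)) := by
          rw [h1, one_pow, mul_one]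
      _ = x ^ k := by rw [← pow_mul, ← pow_add, ← hk1]


lemma eval_fermatReduce {σ : Type*} (p : ℕ) [Fact p.Prime]
    (F : MvPolynomial σ (ZMod p)) (x : σ → ZMod p) :
    eval x (fermatReduce p F) = eval x F := by
  conv_rhs => rw [← F.support_sum_monomial_coeff]
  rw [fermatReduce, map_sum, map_sum]
  refine Finset.sum_congr rfl fun d _ => ?_
  rw [eval_monomial, eval_monomial]
  congr 1
  rw [Finsupp.prod_mapRange_index (by simp)]
  exact Finsupp.prod_congr fun k _ => pow_fermatExp p (x k) (d k)

lemma mem_support_fermatReduce {σ : Type*} (p : ℕ) (F : MvPolynomial σ (ZMod p))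
    (d' : σ →₀ ℕ) (h : d' ∈ (fermatReduce p F).support) :
    ∃ d ∈ F.support, d' = d.mapRange (fermatExp p) (fermatExp_zero p) := by
  by_contra hc
  push_neg at hc
  apply MvPolynomial.mem_support_iff.mp h
  rw [fermatReduce, MvPolynomial.coeff_sum]
  refine Finset.sum_eq_zero fun d hd => ?_
  rw [MvPolynomial.coeff_monomial, if_neg]
  exact fun hh => hc d hd hh.symm

lemma degreeOf_fermatReduce_le {σ : Type*} (p : ℕ) (hp : 2 ≤ p)
    (F : MvPolynomial σ (ZMod p)) (j : σ) :
    degreeOf j (fermatReduce p F) ≤ min (p - 1) (degreeOf j F) := by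
  rw [MvPolynomial.degreeOf_le_iff]
  intro d' hd'
  obtain ⟨d, hd, rfl⟩ := mem_support_fermatReduce p F d' hd'
  rw [Finsupp.mapRange_apply]
  exact le_min (fermatExp_le _ _ hp)
    ((fermatExp_le_self _ _).trans (MvPolynomial.degreeOf_le_iff.mp le_rfl d hd))

lemma eval_fermatReduceUni (p : ℕ) [Fact p.Prime] (f : Polynomial (ZMod p)) (a : ZMod p) :
    (fermatReduceUni p f).eval a = f.eval a := by
  conv_rhs => rw [f.as_sum_support]
  rw [fermatReduceUni, Polynomial.eval_finset_sum, Polynomial.eval_finset_sum]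
  refine Finset.sum_congr rfl fun k _ => ?_
  rw [Polynomial.eval_monomial, Polynomial.eval_monomial, pow_fermatExp]

lemma exists_eval_ne_zero_uni (p : ℕ) [Fact p.Prime] (f : Polynomial (ZMod p))
    (hf : fermatReduceUni p f ≠ 0) : ∃ a : ZMod p, f.eval a ≠ 0 := by
  have hp2 : 2 ≤ p := (Fact.out : p.Prime).two_le
  have hdeg : (fermatReduceUni p f).natDegree ≤ p - 1 := by
    apply Polynomial.natDegree_sum_le_of_forall_le
    intro k _
    exact (Polynomial.natDegree_monomial_le _).trans (fermatExp_le p k hp2)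
  obtain ⟨a, ha⟩ := (fermatReduceUni p f).exists_eval_ne_zero_of_natDegree_lt_card hf
    (by
      rw [Cardinal.mk_fintype, ZMod.card]
      exact_mod_cast lt_of_le_of_lt hdeg (by omega))
  exact ⟨a, by rwa [eval_fermatReduceUni] at ha⟩

lemma mv_exists_eval_ne_zero {σ : Type} [Fintype σ] (p : ℕ) [Fact p.Prime]
    (F : MvPolynomial σ (ZMod p)) (hF : F ≠ 0) (hdeg : ∀ j, degreeOf j F ≤ p - 1) :
    ∃ x : σ → ZMod p, eval x F ≠ 0 := by
  by_contra hc
  push_neg at hc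
  apply hF
  apply MvPolynomial.eq_zero_of_eval_eq_zero σ (ZMod p) F hc
  rw [MvPolynomial.mem_restrictDegree]
  intro s hs j
  rw [ZMod.card]
  exact MvPolynomial.degreeOf_le_iff.mp (hdeg j) s hs


lemma coeff_coeff_sumAlgEquiv {R : Type*} [CommSemiring R] {σ τ : Type*}
    (F : MvPolynomial (σ ⊕ τ) R) (d : σ →₀ ℕ) (e : τ →₀ ℕ) :
    MvPolynomial.coeff e (MvPolynomial.coeff d (sumAlgEquiv R σ τ F)) =
      MvPolynomial.coeff (Finsupp.sumElim d e) F := by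
  have key : ∀ F : MvPolynomial (σ ⊕ τ) R, ∀ (d : σ →₀ ℕ) (e : τ →₀ ℕ),
      MvPolynomial.coeff e (MvPolynomial.coeff d (sumToIter R σ τ F)) =
        MvPolynomial.coeff (Finsupp.sumElim d e) F := by
    intro F
    induction F using MvPolynomial.induction_on with
    | C a =>
      intro d e
      rw [sumToIter_C, coeff_C, coeff_C]
      by_cases hd : d = 0
      · subst hd
        rw [if_pos rfl, coeff_C]
        by_cases he : e = 0
        · subst he
          rw [if_pos rfl, if_pos]
          ext x
          cases x <;> simp
        · rw [if_neg (Ne.symm he), if_neg]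
          intro hh
          apply he
          ext t
          have := congrArg (fun f : σ ⊕ τ →₀ ℕ => f (Sum.inr t)) hh.symm
          simpa using this
      · rw [if_neg (Ne.symm hd), coeff_zero, if_neg]
        intro hh
        apply hd
        ext s
        have := congrArg (fun f : σ ⊕ τ →₀ ℕ => f (Sum.inl s)) hh.symm
        simpa using this
    | add F G hF hG =>
      intro d e
      rw [map_add, coeff_add, coeff_add, coeff_add, hF, hG]
    | mul_X F s hF =>
      intro d e
      cases s with
      | inl b =>
        rw [map_mul, sumToIter_Xl, coeff_mul_X', coeff_mul_X']
        by_cases hb : b ∈ d.support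
        · rw [if_pos hb, if_pos (by simpa using hb), hF]
          congr 1
          ext x
          cases x with
          | inl s => simp [Finsupp.single_apply]
          | inr t => simp [Finsupp.single_apply]
        · rw [if_neg hb, if_neg (by simpa using hb), coeff_zero]
      | inr t =>
        rw [map_mul, sumToIter_Xr, mul_comm ((sumToIter R σ τ) F) (C (X t)), coeff_C_mul,
          mul_comm (X t : MvPolynomial τ R), coeff_mul_X', coeff_mul_X']
        by_cases ht : t ∈ e.support
        · rw [if_pos ht, if_pos (by simpa using ht), hF]
          congr 1
          ext x
          cases x with
          | inl s => simp [Finsupp.single_apply]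
          | inr t' => simp [Finsupp.single_apply]
        · rw [if_neg ht, if_neg (by simpa using ht)]
  rw [← key]
  congr 2
  induction F using MvPolynomial.induction_on with
  | C a => simp [sumToIter_C]
  | add f g hf hg => rw [map_add, map_add, hf, hg]
  | mul_X f s hf => cases s <;> simp [map_mul, hf, sumToIter_Xl, sumToIter_Xr]


section Subst
variable {m p : ℕ} [Fact p.Prime]

/-- substitution of `a` for variable `i` -/
def substVar (i : Fin m) (a : ZMod p) (F : MvPolynomial (Fin m) (ZMod p)) :
    MvPolynomial (Fin m) (ZMod p) :=
  aeval (fun k => if k = i then (C a : MvPolynomial (Fin m) (ZMod p)) else X k) F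

lemma substVar_eq_sum (i : Fin m) (a : ZMod p) (F : MvPolynomial (Fin m) (ZMod p)) :
    substVar i a F =
      ∑ d ∈ F.support, monomial (Finsupp.erase i d) (F.coeff d * a ^ d i) := by
  rw [substVar]
  conv_lhs => rw [← F.support_sum_monomial_coeff]
  rw [map_sum]
  refine Finset.sum_congr rfl fun d _ => ?_
  rw [aeval_monomial]
  have hsplit : d = Finsupp.erase i d + Finsupp.single i (d i) := (Finsupp.erase_add_single i d).symm
  rw [monomial_eq]
  conv_lhs => rw [hsplit]
  rw [Finsupp.prod_add_index (by intro k _; simp) (by intro k _ x y; rw [pow_add])]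
  rw [Finsupp.prod_single_index (by simp)]
  rw [if_pos rfl]
  have h2 : (Finsupp.erase i d).prod
      (fun k n => (if k = i then (C a : MvPolynomial (Fin m) (ZMod p)) else X k) ^ n) =
      (Finsupp.erase i d).prod fun k n => (X k : MvPolynomial (Fin m) (ZMod p)) ^ n := by
    apply Finsupp.prod_congr
    intro k hk
    rw [if_neg]
    intro hki
    subst hki
    simp [Finsupp.support_erase] at hk
  rw [h2, ← hsplit]
  simp only [algebraMap_eq, ← C_pow, ← C_mul]
  rw [C_mul]
  ring

lemma mem_support_substVar (i : Fin m) (a : ZMod p) (F : MvPolynomial (Fin m) (ZMod p))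
    (d' : Fin m →₀ ℕ) (h : d' ∈ (substVar i a F).support) :
    ∃ d ∈ F.support, d' = Finsupp.erase i d := by
  by_contra hc
  push_neg at hc
  apply MvPolynomial.mem_support_iff.mp h
  rw [substVar_eq_sum, MvPolynomial.coeff_sum]
  refine Finset.sum_eq_zero fun d hd => ?_
  rw [MvPolynomial.coeff_monomial, if_neg]
  exact fun hh => hc d hd hh.symm

lemma degreeOf_substVar_le (i : Fin m) (a : ZMod p) (F : MvPolynomial (Fin m) (ZMod p))
    (j : Fin m) : degreeOf j (substVar i a F) ≤ degreeOf j F := by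
  rw [MvPolynomial.degreeOf_le_iff]
  intro d' hd'
  obtain ⟨d, hd, rfl⟩ := mem_support_substVar i a F d' hd'
  calc (Finsupp.erase i d) j ≤ d j := by
        rw [Finsupp.erase_apply]; split <;> omega
    _ ≤ degreeOf j F := MvPolynomial.degreeOf_le_iff.mp le_rfl d hd

lemma eval_substVar (i : Fin m) (a : ZMod p) (F : MvPolynomial (Fin m) (ZMod p))
    (b : Fin m → ZMod p) :
    eval b (substVar i a F) = eval (Function.update b i a) F := by
  have h : Function.update b i a = fun k =>
      eval b (if k = i then (C a : MvPolynomial (Fin m) (ZMod p)) else X k) := by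
    funext k
    by_cases hk : k = i
    · subst hk; simp
    · simp [hk, Function.update_apply]
  rw [h]
  exact eval₂Hom_bind₁ (RingHom.id (ZMod p)) b _ F

end Subst



-- ### Degree bound helpers

lemma support_X_sub_X {σ : Type*} {R : Type*} [CommRing R] [Nontrivial R] (k j : σ) (d : σ →₀ ℕ)
    (hd : d ∈ (X k - X j : MvPolynomial σ R).support) :
    d = Finsupp.single k 1 ∨ d = Finsupp.single j 1 := by
  have := MvPolynomial.support_sub σ (X k) (X j) hd
  rw [Finset.mem_union, support_X, support_X] at this
  simpa using this

lemma degreeOf_X_sub_X_le {σ : Type*} {R : Type*} [CommRing R] [Nontrivial R] (k j l : σ) :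
    degreeOf l (X k - X j : MvPolynomial σ R) ≤ 1 := by
  rw [degreeOf_le_iff]
  intro d hd
  rcases support_X_sub_X k j d hd with rfl | rfl <;>
    · rw [Finsupp.single_apply]; split <;> omega

lemma degreeOf_X_sub_X_eq_zero {σ : Type*} {R : Type*} [CommRing R] [Nontrivial R] {k j l : σ}
    (h1 : l ≠ k) (h2 : l ≠ j) :
    degreeOf l (X k - X j : MvPolynomial σ R) = 0 := by
  refine Nat.le_zero.mp ?_
  rw [degreeOf_le_iff]
  intro d hd
  rcases support_X_sub_X k j d hd with rfl | rfl <;>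
    · rw [Finsupp.single_apply, if_neg (by tauto)]

lemma mem_support_X_sub_C {σ : Type*} {R : Type*} [CommRing R] [Nontrivial R] {k : σ} {c : R} (d : σ →₀ ℕ)
    (hd : d ∈ (X k - C c : MvPolynomial σ R).support) :
    d = Finsupp.single k 1 ∨ d = 0 := by
  have := MvPolynomial.support_sub σ (X k) (C c) hd
  rw [Finset.mem_union, support_X] at this
  rcases this with h | h
  · exact Or.inl (Finset.mem_singleton.mp h)
  · right
    have := MvPolynomial.mem_support_iff.mp h
    rw [coeff_C] at this
    by_contra hne
    exact this (if_neg fun hh => hne hh.symm)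

lemma degreeOf_X_sub_C_le {σ : Type*} {R : Type*} [CommRing R] [Nontrivial R] (k l : σ) (c : R) :
    degreeOf l (X k - C c : MvPolynomial σ R) ≤ 1 := by
  rw [degreeOf_le_iff]
  intro d hd
  rcases mem_support_X_sub_C d hd with rfl | rfl
  · rw [Finsupp.single_apply]; split <;> omega
  · simp

lemma degreeOf_X_sub_C_eq_zero {σ : Type*} {R : Type*} [CommRing R] [Nontrivial R] {k l : σ}
    (h1 : l ≠ k) (c : R) :
    degreeOf l (X k - C c : MvPolynomial σ R) = 0 := by
  refine Nat.le_zero.mp ?_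
  rw [degreeOf_le_iff]
  intro d hd
  rcases mem_support_X_sub_C d hd with rfl | rfl
  · rw [Finsupp.single_apply, if_neg (by tauto)]
  · simp

lemma mem_support_C_sub_X {σ : Type*} {R : Type*} [CommRing R] [Nontrivial R] {k : σ} {c : R} (d : σ →₀ ℕ)
    (hd : d ∈ (C c - X k : MvPolynomial σ R).support) :
    d = Finsupp.single k 1 ∨ d = 0 := by
  have hneg : (C c - X k : MvPolynomial σ R) = -(X k - C c) := by ring
  rw [hneg, support_neg] at hd
  exact mem_support_X_sub_C d hd

lemma degreeOf_C_sub_X_le {σ : Type*} {R : Type*} [CommRing R] [Nontrivial R] (k l : σ) (c : R) :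
    degreeOf l (C c - X k : MvPolynomial σ R) ≤ 1 := by
  rw [degreeOf_le_iff]
  intro d hd
  rcases mem_support_C_sub_X d hd with rfl | rfl
  · rw [Finsupp.single_apply]; split <;> omega
  · simp

lemma degreeOf_C_sub_X_eq_zero {σ : Type*} {R : Type*} [CommRing R] [Nontrivial R] {k l : σ}
    (h1 : l ≠ k) (c : R) :
    degreeOf l (C c - X k : MvPolynomial σ R) = 0 := by
  refine Nat.le_zero.mp ?_
  rw [degreeOf_le_iff]
  intro d hd
  rcases mem_support_C_sub_X d hd with rfl | rfl
  · rw [Finsupp.single_apply, if_neg (by tauto)]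
  · simp

lemma C_sub_X_ne_zero {σ : Type*} {R : Type*} [CommRing R] [Nontrivial R] (a : R) (l : σ) :
    (C a - X l : MvPolynomial σ R) ≠ 0 := by
  intro h
  have h2 := congrArg (MvPolynomial.coeff (Finsupp.single l 1)) h
  rw [coeff_sub, coeff_C, coeff_X, coeff_zero] at h2
  rw [if_neg (by simp [eq_comm, Finsupp.single_eq_zero])] at h2
  simp at h2


/-- `N_e(v_i)`: the edges incident to the vertex `i`. -/
def incidentE {n m : ℕ} (ed : Fin m → Sym2 (Fin n)) (i : Fin n) : Finset (Fin m) :=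
  Finset.univ.filter fun k => i ∈ ed k

/-- `N_i(v_i)`: the neighbours of `v_i` other than `v_1, …, v_{i-1}`. -/
def laterNbrs {n m : ℕ} (ed : Fin m → Sym2 (Fin n)) (i : Fin n) : Finset (Fin n) :=
  Finset.univ.filter fun j => (∃ k, ed k = s(i, j)) ∧ ¬ j < i

/-- `N_i(e_i)`: the edges sharing an endpoint with `e_i`, other than `e_1, …, e_{i-1}`. -/
def laterAdjE {n m : ℕ} (ed : Fin m → Sym2 (Fin n)) (k : Fin m) : Finset (Fin m) :=
  Finset.univ.filter fun l => (l ≠ k ∧ ∃ x, x ∈ ed k ∧ x ∈ ed l) ∧ ¬ l < k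

/-- The polynomial `P` (vertex variables are `Sum.inl`, edge variables are `Sum.inr`). -/
def Ppoly (n m Δ p : ℕ) (ed : Fin m → Sym2 (Fin n)) : MvPolynomial (Fin n ⊕ Fin m) (ZMod p) :=
  ∏ i : Fin n,
    ((∏ j ∈ laterNbrs ed i, (X (Sum.inl i) - X (Sum.inl j))) *
      (∏ k ∈ incidentE ed i, (X (Sum.inl i) - X (Sum.inr k))) *
      (∏ l ∈ Finset.Icc (Δ + 2) p, (X (Sum.inl i) - C (l : ZMod p))))

/-- The coefficient of the vertex-monomial `∏ v_j ^ (d j)` of `F`, as a polynomial in the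
edge variables. -/
def vCoeff {n m p : ℕ} (F : MvPolynomial (Fin n ⊕ Fin m) (ZMod p)) (d : Fin n →₀ ℕ) :
    MvPolynomial (Fin m) (ZMod p) :=
  ((sumAlgEquiv (ZMod p) (Fin n) (Fin m)) F).coeff d

/-- The colour set `K = {1, …, Δ+1} ∪ {α} ⊆ Z_p`. -/
def colorSet (Δ p : ℕ) (α : ZMod p) : Finset (ZMod p) :=
  insert α ((Finset.Icc 1 (Δ + 1)).image fun l : ℕ => (l : ZMod p))

/-- The polynomial `E^k`. -/
def Epoly {n m : ℕ} (Δ p : ℕ) [NeZero p] (ed : Fin m → Sym2 (Fin n)) (α : ZMod p) (k : Fin m) :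
    MvPolynomial (Fin m) (ZMod p) :=
  (∏ l ∈ laterAdjE ed k, (X k - X l)) *
    (∏ c ∈ Finset.univ \ colorSet Δ p α, (X k - C c))

/-- `Q_i = C^{P'} · E^1 ⋯ E^i`; here `i` is the number of edge factors, so `Qpoly … i`
is the paper's `Q_i` (and `Qpoly … 0 = C^{P'}`). -/
def Qpoly {n m : ℕ} (Δ p : ℕ) [NeZero p] (ed : Fin m → Sym2 (Fin n)) (α : ZMod p)
    (CP : MvPolynomial (Fin m) (ZMod p)) (i : ℕ) : MvPolynomial (Fin m) (ZMod p) :=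
  CP * ∏ k ∈ Finset.univ.filter (fun k : Fin m => (k : ℕ) < i), Epoly Δ p ed α k

/-- Fermat reduction in all variables except the variable `j`. -/
def fermatReduceExcept {m : ℕ} (p : ℕ) (j : Fin m) (F : MvPolynomial (Fin m) (ZMod p)) :
    MvPolynomial (Fin m) (ZMod p) :=
  F.support.sum fun d =>
    monomial (Finsupp.filter (fun k => k = j) d +
      Finsupp.mapRange (fermatExp p) (fermatExp_zero p) (Finsupp.filter (fun k => k ≠ j) d))
      (F.coeff d)

/-- Given an exponent vector `d0` for the variables other than `j`, the coefficient in `F` of the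
monomial `∏_{k ≠ j} X_k ^ (d0 k)`, as a univariate polynomial in the variable `j`. -/
def coeffAt {m p : ℕ} (j : Fin m) (d0 : Fin m →₀ ℕ) (F : MvPolynomial (Fin m) (ZMod p)) :
    Polynomial (ZMod p) :=
  (F.support.filter fun d => ∀ k, k ≠ j → d k = d0 k).sum fun d =>
    Polynomial.monomial (d j) (F.coeff d)



lemma degreeOf_vCoeff_le {n m p : ℕ} {F : MvPolynomial (Fin n ⊕ Fin m) (ZMod p)}
    (d : Fin n →₀ ℕ) (l : Fin m) :
    degreeOf l (vCoeff F d) ≤ degreeOf (Sum.inr l) F := by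
  rw [degreeOf_le_iff]
  intro e he
  have h := coeff_coeff_sumAlgEquiv F d e
  have hne : MvPolynomial.coeff (Finsupp.sumElim d e) F ≠ 0 := by
    rw [← h]
    exact MvPolynomial.mem_support_iff.mp he
  have hle := MvPolynomial.degreeOf_le_iff.mp (le_refl (degreeOf (Sum.inr l) F)) _
    (MvPolynomial.mem_support_iff.mpr hne)
  simpa using hle


-- ### Degree bounds for the concrete polynomials

lemma degreeOf_Epoly_le {n m : ℕ} (Δ p : ℕ) [Fact p.Prime] (ed : Fin m → Sym2 (Fin n)) (α : ZMod p)
    (k l : Fin m) (hlk : l ≠ k) : degreeOf l (Epoly Δ p ed α k) ≤ 1 := by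
  rw [Epoly]
  refine (degreeOf_mul_le _ _ _).trans ?_
  have h2 : degreeOf l (∏ c ∈ Finset.univ \ colorSet Δ p α, (X k - C c : MvPolynomial (Fin m) (ZMod p))) = 0 := by
    refine Nat.le_zero.mp ((degreeOf_prod_le _ _ _).trans ?_)
    rw [Finset.sum_eq_zero fun c _ => degreeOf_X_sub_C_eq_zero hlk c]
  have h1 : degreeOf l (∏ j ∈ laterAdjE ed k, (X k - X j : MvPolynomial (Fin m) (ZMod p))) ≤ 1 := by
    refine (degreeOf_prod_le _ _ _).trans ?_
    calc ∑ j ∈ laterAdjE ed k, degreeOf l (X k - X j : MvPolynomial (Fin m) (ZMod p))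
        ≤ ∑ j ∈ laterAdjE ed k, (if j = l then 1 else 0) := by
          refine Finset.sum_le_sum fun j _ => ?_
          by_cases hj : j = l
          · rw [if_pos hj]; exact degreeOf_X_sub_X_le k j l
          · rw [if_neg hj, degreeOf_X_sub_X_eq_zero hlk (Ne.symm hj)]
      _ ≤ 1 := by
          rw [Finset.sum_ite_eq' (laterAdjE ed k) l (fun _ => 1)]
          split <;> omega
  omega

lemma card_mem_sym2_le {n : ℕ} (z : Sym2 (Fin n)) :
    (Finset.univ.filter fun i => i ∈ z).card ≤ 2 := by
  induction z using Sym2.ind with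
  | _ x y =>
    refine (Finset.card_le_card fun i hi => ?_).trans
      ((Finset.card_insert_le x {y}).trans (by simp))
    have : i ∈ s(x, y) := (Finset.mem_filter.mp hi).2
    rw [Sym2.mem_iff] at this
    show i ∈ ({x, y} : Finset (Fin n))
    simpa using this

lemma degreeOf_Ppoly_le (n m Δ p : ℕ) [Fact p.Prime] (ed : Fin m → Sym2 (Fin n)) (l : Fin m) :
    degreeOf (Sum.inr l) (Ppoly n m Δ p ed) ≤ 2 := by
  rw [Ppoly]
  refine (degreeOf_prod_le _ _ _).trans ?_
  have hpt : ∀ i : Fin n, degreeOf (Sum.inr l)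
      ((∏ j ∈ laterNbrs ed i, (X (Sum.inl i) - X (Sum.inl j))) *
        (∏ k ∈ incidentE ed i, (X (Sum.inl i) - X (Sum.inr k))) *
        (∏ c ∈ Finset.Icc (Δ + 2) p, (X (Sum.inl i) - C (c : ZMod p)))) ≤
      (if i ∈ ed l then 1 else 0) := by
    intro i
    refine (degreeOf_mul_le _ _ _).trans ?_
    refine le_trans (add_le_add_left (degreeOf_mul_le _ _ _) _) ?_
    have hB1 : degreeOf (Sum.inr l)
        (∏ j ∈ laterNbrs ed i, (X (Sum.inl i) - X (Sum.inl j) : MvPolynomial (Fin n ⊕ Fin m) (ZMod p))) = 0 := by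
      refine Nat.le_zero.mp ((degreeOf_prod_le _ _ _).trans ?_)
      rw [Finset.sum_eq_zero fun j _ => degreeOf_X_sub_X_eq_zero (by simp) (by simp)]
    have hB3 : degreeOf (Sum.inr l)
        (∏ c ∈ Finset.Icc (Δ + 2) p, (X (Sum.inl i) - C (c : ZMod p) : MvPolynomial (Fin n ⊕ Fin m) (ZMod p))) = 0 := by
      refine Nat.le_zero.mp ((degreeOf_prod_le _ _ _).trans ?_)
      rw [Finset.sum_eq_zero fun c _ => degreeOf_X_sub_C_eq_zero (by simp) _]
    have hB2 : degreeOf (Sum.inr l)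
        (∏ k ∈ incidentE ed i, (X (Sum.inl i) - X (Sum.inr k) : MvPolynomial (Fin n ⊕ Fin m) (ZMod p))) ≤
        (if i ∈ ed l then 1 else 0) := by
      refine (degreeOf_prod_le _ _ _).trans ?_
      calc ∑ k ∈ incidentE ed i, degreeOf (Sum.inr l)
            (X (Sum.inl i) - X (Sum.inr k) : MvPolynomial (Fin n ⊕ Fin m) (ZMod p))
          ≤ ∑ k ∈ incidentE ed i, (if k = l then 1 else 0) := by
            refine Finset.sum_le_sum fun k _ => ?_
            by_cases hk : k = l
            · rw [if_pos hk]; exact degreeOf_X_sub_X_le _ _ _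
            · rw [if_neg hk,
                degreeOf_X_sub_X_eq_zero (by simp) (by simp [Ne.symm hk])]
        _ = if l ∈ incidentE ed i then 1 else 0 :=
            Finset.sum_ite_eq' (incidentE ed i) l (fun _ => 1)
        _ = if i ∈ ed l then 1 else 0 := by
            simp [incidentE]
    omega
  calc ∑ i : Fin n, degreeOf (Sum.inr l) _ ≤ ∑ i : Fin n, (if i ∈ ed l then 1 else 0) :=
        Finset.sum_le_sum fun i _ => hpt i
    _ = (Finset.univ.filter fun i => i ∈ ed l).card := (Finset.card_filter _ _).symm
    _ ≤ 2 := card_mem_sym2_le _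

lemma degreeOf_Qpoly_le {n m : ℕ} (Δ p : ℕ) [Fact p.Prime] (ed : Fin m → Sym2 (Fin n)) (α : ZMod p)
    (CP : MvPolynomial (Fin m) (ZMod p)) (N : ℕ) (l : Fin m) (hl : N ≤ (l : ℕ)) :
    degreeOf l (Qpoly Δ p ed α CP N) ≤ degreeOf l CP + m := by
  rw [Qpoly]
  refine (degreeOf_mul_le _ _ _).trans (add_le_add_right ?_ _)
  refine (degreeOf_prod_le _ _ _).trans ?_
  calc ∑ k ∈ Finset.univ.filter (fun k : Fin m => (k : ℕ) < N), degreeOf l (Epoly Δ p ed α k)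
      ≤ ∑ _k ∈ Finset.univ.filter (fun k : Fin m => (k : ℕ) < N), 1 := by
        refine Finset.sum_le_sum fun k hk => ?_
        refine degreeOf_Epoly_le Δ p ed α k l fun hlk => ?_
        have := (Finset.mem_filter.mp hk).2
        omega
    _ ≤ m := by
        rw [Finset.sum_const, smul_eq_mul, mul_one]
        exact (Finset.card_filter_le _ _).trans (by simp)

lemma Qpoly_succ {n m : ℕ} (Δ p : ℕ) [NeZero p] (ed : Fin m → Sym2 (Fin n)) (α : ZMod p)
    (CP : MvPolynomial (Fin m) (ZMod p)) (i : Fin m) :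
    Qpoly Δ p ed α CP ((i : ℕ) + 1) = Qpoly Δ p ed α CP (i : ℕ) * Epoly Δ p ed α i := by
  rw [Qpoly, Qpoly]
  have hset : Finset.univ.filter (fun k : Fin m => (k : ℕ) < (i : ℕ) + 1)
      = insert i (Finset.univ.filter fun k : Fin m => (k : ℕ) < (i : ℕ)) := by
    ext k
    simp [Fin.ext_iff]
    omega
  rw [hset, Finset.prod_insert (by simp)]
  ring

/-- Remark 3.8 of the paper.  Write the (nonzero) Fermat reduction `Q'_{i-1}`
as a sum over monomials `M` in the variables `e_r`, `r ≠ i`, with coefficients `C_M(e_i)` that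
are univariate of degree `≤ p-1` in `e_i`.  If some monomial `M` (given by an exponent vector
`d0` with `d0 i = 0`) is such that the Fermat reduction (in `e_i`) of
`C_M(e_i)·∏_{l ∈ Z_p ∖ K}(e_i - l)` is nonzero, then the Fermat reduction `Q'_i` of
`Q_i = Q_{i-1}·E^i` is nonzero. -/
theorem statement12 (n m Δ p : ℕ) [Fact p.Prime]
    (hm : 1 ≤ m) (hp : m ^ 2 * (2 * Δ + 2) ≤ p)
    (ed : Fin m → Sym2 (Fin n)) (hinj : Function.Injective ed)
    (hsimple : ∀ k, ¬ (ed k).IsDiag)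
    (hΔ : ∀ i, (incidentE ed i).card ≤ Δ)
    (hΔmax : ∃ i, (incidentE ed i).card = Δ)
    (d : Fin n →₀ ℕ) (CP : MvPolynomial (Fin m) (ZMod p))
    (hCP : CP = vCoeff (fermatReduce p (Ppoly n m Δ p ed)) d) (hCP0 : CP ≠ 0)
    (α : ZMod p) (hα : α ∉ (Finset.range (Δ + 2)).image fun l : ℕ => (l : ZMod p))
    (i : Fin m) (hi : 1 ≤ (i : ℕ))
    (hQprev : fermatReduce p (Qpoly Δ p ed α CP (i : ℕ)) ≠ 0) :
    (∃ d0 : Fin m →₀ ℕ, d0 i = 0 ∧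
        fermatReduceUni p
          (coeffAt i d0 (fermatReduce p (Qpoly Δ p ed α CP (i : ℕ))) *
            ∏ c ∈ Finset.univ \ colorSet Δ p α, (Polynomial.X - Polynomial.C c)) ≠ 0) →
      fermatReduce p (Qpoly Δ p ed α CP ((i : ℕ) + 1)) ≠ 0 := by
  rintro ⟨d0, hd0, hC⟩ h0
  have hp2 : 2 ≤ p := (Fact.out : p.Prime).two_le
  set R := fermatReduce p (Qpoly Δ p ed α CP (i : ℕ)) with hRdef
  -- choose the value `a`
  obtain ⟨a, ha⟩ := exists_eval_ne_zero_uni p _ hC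
  rw [Polynomial.eval_mul, Polynomial.eval_prod] at ha
  simp only [Polynomial.eval_sub, Polynomial.eval_X, Polynomial.eval_C] at ha
  have haC : Polynomial.eval a (coeffAt i d0 R) ≠ 0 := fun h => ha (by rw [h, zero_mul])
  have haK : (∏ c ∈ Finset.univ \ colorSet Δ p α, (a - c)) ≠ 0 := fun h => ha (by rw [h, mul_zero])
  -- the substituted polynomial `S`
  set S := substVar i a R with hSdef
  have hcoeffS : MvPolynomial.coeff d0 S = Polynomial.eval a (coeffAt i d0 R) := by
    rw [hSdef, substVar_eq_sum, MvPolynomial.coeff_sum, coeffAt, Polynomial.eval_finset_sum]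
    rw [Finset.sum_filter]
    refine Finset.sum_congr rfl fun d _ => ?_
    rw [MvPolynomial.coeff_monomial, Polynomial.eval_monomial]
    refine if_congr ?_ rfl rfl
    constructor
    · intro h k hk
      rw [← h, Finsupp.erase_ne hk]
    · intro h
      ext k
      by_cases hk : k = i
      · subst hk; rw [Finsupp.erase_same, hd0]
      · rw [Finsupp.erase_ne hk, h k hk]
  have hS0 : S ≠ 0 := fun h => haC (by rw [← hcoeffS, h, MvPolynomial.coeff_zero])
  -- arithmetic
  have hm2 : 2 ≤ m := by have := i.isLt; omega
  have hparith : m + 3 ≤ p - 1 := by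
    have h1 : m * m * 2 ≤ m ^ 2 * (2 * Δ + 2) := by
      rw [pow_two]
      exact Nat.mul_le_mul_left _ (by omega)
    have h2 : 2 * m ≤ m * m := Nat.mul_le_mul_right m hm2
    omega
  -- degree bound on `CP`
  have hCP2 : ∀ l : Fin m, degreeOf l CP ≤ 2 := by
    intro l
    rw [hCP]
    refine (degreeOf_vCoeff_le _ _).trans ?_
    refine ((degreeOf_fermatReduce_le p hp2 _ _).trans (min_le_right _ _)).trans ?_
    exact degreeOf_Ppoly_le n m Δ p ed l
  -- the test polynomial `T`
  set T := S * ∏ l ∈ laterAdjE ed i, (C a - X l) with hTdef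
  have hadj : ∀ l ∈ laterAdjE ed i, (i : ℕ) < (l : ℕ) := by
    intro l hl
    have := Finset.mem_filter.mp hl
    have h1 : l ≠ i := this.2.1.1
    have h2 : ¬ l < i := this.2.2
    rw [Fin.lt_def] at h2
    rw [Ne, Fin.ext_iff] at h1
    omega
  have hT0 : T ≠ 0 :=
    mul_ne_zero hS0 (Finset.prod_ne_zero_iff.mpr fun l _ => C_sub_X_ne_zero a l)
  have hTdeg : ∀ j, degreeOf j T ≤ p - 1 := by
    intro j
    refine (degreeOf_mul_le _ _ _).trans ?_
    have hSj : degreeOf j S ≤ min (p - 1) (degreeOf j (Qpoly Δ p ed α CP (i : ℕ))) :=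
      (degreeOf_substVar_le i a _ j).trans (degreeOf_fermatReduce_le p hp2 _ j)
    by_cases hj : j ∈ laterAdjE ed i
    · have h1 : degreeOf j (Qpoly Δ p ed α CP (i : ℕ)) ≤ 2 + m := by
        refine (degreeOf_Qpoly_le Δ p ed α CP (i : ℕ) j (le_of_lt (hadj j hj))).trans ?_
        have := hCP2 j
        omega
      have hprod : degreeOf j (∏ l ∈ laterAdjE ed i, (C a - X l : MvPolynomial (Fin m) (ZMod p))) ≤ 1 := by
        refine (degreeOf_prod_le _ _ _).trans ?_
        calc ∑ l ∈ laterAdjE ed i, degreeOf j (C a - X l : MvPolynomial (Fin m) (ZMod p))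
            ≤ ∑ l ∈ laterAdjE ed i, (if l = j then 1 else 0) := by
              refine Finset.sum_le_sum fun l _ => ?_
              by_cases hlj : l = j
              · rw [if_pos hlj]; exact degreeOf_C_sub_X_le l j a
              · rw [if_neg hlj, degreeOf_C_sub_X_eq_zero (Ne.symm hlj) a]
          _ ≤ 1 := by
              rw [Finset.sum_ite_eq' (laterAdjE ed i) j (fun _ => 1)]
              split <;> omega
      have := hSj.trans (min_le_right _ _)
      omega
    · have hprod : degreeOf j (∏ l ∈ laterAdjE ed i, (C a - X l : MvPolynomial (Fin m) (ZMod p))) = 0 := by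
        refine Nat.le_zero.mp ((degreeOf_prod_le _ _ _).trans ?_)
        rw [Finset.sum_eq_zero]
        intro l hl
        exact degreeOf_C_sub_X_eq_zero (fun h => hj (by rw [h]; exact hl)) a
      have := hSj.trans (min_le_left _ _)
      omega
  obtain ⟨b, hb⟩ := mv_exists_eval_ne_zero p T hT0 hTdeg
  -- the evaluation point
  set x := Function.update b i a with hx
  have hxl : ∀ l ∈ laterAdjE ed i, x l = b l := by
    intro l hl
    have : l ≠ i := (Finset.mem_filter.mp hl).2.1.1
    rw [hx, Function.update_apply, if_neg this]
  have hevalRS : eval x (Qpoly Δ p ed α CP (i : ℕ)) = eval b S := by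
    rw [hSdef, eval_substVar, ← hx, hRdef, eval_fermatReduce]
  have hevalE : eval x (Epoly Δ p ed α i) =
      (∏ l ∈ laterAdjE ed i, (a - b l)) * ∏ c ∈ Finset.univ \ colorSet Δ p α, (a - c) := by
    rw [Epoly, map_mul]
    congr 1
    · rw [map_prod]
      refine Finset.prod_congr rfl fun l hl => ?_
      rw [map_sub, eval_X, eval_X, hxl l hl, hx, Function.update_self]
    · rw [map_prod]
      refine Finset.prod_congr rfl fun c _ => ?_
      rw [map_sub, eval_X, eval_C, hx, Function.update_self]
  have hevalT : eval b T = eval b S * ∏ l ∈ laterAdjE ed i, (a - b l) := by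
    rw [hTdef, map_mul, map_prod]
    congr 1
    refine Finset.prod_congr rfl fun l _ => ?_
    rw [map_sub, eval_X, eval_C]
  -- conclusion
  have final : eval x (Qpoly Δ p ed α CP ((i : ℕ) + 1)) ≠ 0 := by
    rw [Qpoly_succ, map_mul, hevalRS, hevalE, ← mul_assoc]
    rw [hevalT] at hb
    exact mul_ne_zero hb haK
  apply final
  rw [← eval_fermatReduce p _ x, h0, map_zero]

end
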